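/- Let ξ₁, ξ₂, ξ₃ ∈ ℝ² and τ₁, τ₂, τ₃ ∈ ℝ satisfy ξ₁+ξ₂+ξ₃ = 0 and τ₁+τ₂+τ₃ = 0, with ξ₁, ξ₂ ≠ 0. Then for any choice of signs ±₁, ±₂ there is a universal constant C such that ∠(±₁ξ₁, ±₂ξ₂) ≤ C ((⟨τ₁ ±₁ |ξ₁|⟩ + ⟨τ₂ ±₂ |ξ₂|⟩ + ⟨|τ₃| − |ξ₃|⟩)/min(⟨ξ₁⟩, ⟨ξ₂⟩))^{1/2}. -/

import Mathlib

noncomputable section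
open InnerProductGeometry

abbrev E2 := EuclideanSpace ℝ (Fin 2)

/-- Japanese bracket ⟨x⟩ = (1+x²)^{1/2}. -/
def jb (x : ℝ) : ℝ := Real.sqrt (1 + x ^ 2)

lemma jb_nonneg (x : ℝ) : 0 ≤ jb x := Real.sqrt_nonneg _

lemma jb_sq (x : ℝ) : jb x ^ 2 = 1 + x ^ 2 := Real.sq_sqrt (by positivity)

lemma one_le_jb (x : ℝ) : 1 ≤ jb x := by
  nlinarith [jb_sq x, jb_nonneg x, sq_nonneg x]

lemma abs_le_jb (x : ℝ) : |x| ≤ jb x := by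
  nlinarith [jb_sq x, jb_nonneg x, sq_abs x, abs_nonneg x]

lemma jb_le_of (x y : ℝ) (hy : 0 ≤ y) (h : 1 + x ^ 2 ≤ y ^ 2) : jb x ≤ y := by
  nlinarith [jb_sq x, jb_nonneg x]

lemma jb_le_jb {a b : ℝ} (h0 : 0 ≤ a) (h : a ≤ b) : jb a ≤ jb b :=
  Real.sqrt_le_sqrt (by nlinarith)

lemma jb_min (a b : ℝ) (ha : 0 ≤ a) (hb : 0 ≤ b) :
    min (jb a) (jb b) = jb (min a b) := by
  rcases le_total a b with h | h
  · rw [min_eq_left (jb_le_jb ha h), min_eq_left h]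
  · rw [min_eq_right (jb_le_jb hb h), min_eq_right h]

/-- Key real-arithmetic inequality, case `σ₁σ₂ = 1`. -/
lemma keyP {a b c q S : ℝ} (ha : 0 < a) (hb : 0 < b) (hc : 0 ≤ c)
    (hq : |q| ≤ a * b) (hc2 : c ^ 2 = a ^ 2 + b ^ 2 + 2 * q)
    (hS : a + b - c ≤ S) (hS0 : 0 ≤ S) :
    min a b * (a * b - q) ≤ 2 * (a * b) * S := by
  have hq' := abs_le.mp hq
  have hcab : c ≤ a + b := by nlinarith
  have hm1 : min a b ≤ a := min_le_left _ _
  have hm2 : min a b ≤ b := min_le_right _ _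
  have hm0 : 0 < min a b := lt_min ha hb
  have h1 : (a + b - c) * (a + b + c) ≤ S * (a + b + c) :=
    mul_le_mul_of_nonneg_right hS (by linarith)
  have h2 : a * b - q ≤ S * (a + b) := by
    nlinarith [mul_le_mul_of_nonneg_left hcab hS0]
  nlinarith [mul_le_mul_of_nonneg_left h2 hm0.le,
    mul_nonneg hS0 (mul_nonneg (sub_nonneg.mpr hm1) hb.le),
    mul_nonneg hS0 (mul_nonneg (sub_nonneg.mpr hm2) ha.le)]

/-- Key real-arithmetic inequality, case `σ₁σ₂ = -1`. -/
lemma keyM {a b c q S : ℝ} (ha : 0 < a) (hb : 0 < b) (hc : 0 ≤ c)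
    (hq : |q| ≤ a * b) (hc2 : c ^ 2 = a ^ 2 + b ^ 2 + 2 * q)
    (hS : c - |a - b| ≤ S) (hS0 : 0 ≤ S) :
    min a b * (a * b + q) ≤ 2 * (a * b) * S := by
  have hq' := abs_le.mp hq
  have hcab : c ≤ a + b := by nlinarith
  set d := |a - b| with hd
  have hd2 : d ^ 2 = (a - b) ^ 2 := sq_abs _
  have hd0 : 0 ≤ d := abs_nonneg _
  have hdab : d ≤ a + b := by
    rcases abs_cases (a - b) with ⟨h1, _⟩ | ⟨h1, _⟩ <;> rw [hd] <;> linarith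
  have hm1 : min a b ≤ a := min_le_left _ _
  have hm2 : min a b ≤ b := min_le_right _ _
  have hm0 : 0 < min a b := lt_min ha hb
  have h1 : (c - d) * (c + d) ≤ S * (c + d) :=
    mul_le_mul_of_nonneg_right hS (by linarith)
  have h2 : a * b + q ≤ S * (a + b) := by
    nlinarith [mul_le_mul_of_nonneg_left hcab hS0,
      mul_le_mul_of_nonneg_left hdab hS0]
  nlinarith [mul_le_mul_of_nonneg_left h2 hm0.le,
    mul_nonneg hS0 (mul_nonneg (sub_nonneg.mpr hm1) hb.le),
    mul_nonneg hS0 (mul_nonneg (sub_nonneg.mpr hm2) ha.le)]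

lemma abs3 (x y z w : ℝ) (h : w = -x - y + z) : |w| ≤ |x| + |y| + |z| := by
  subst h
  rcases abs_cases (-x - y + z) with ⟨e, _⟩ | ⟨e, _⟩ <;>
  rcases abs_cases x with ⟨e1, _⟩ | ⟨e1, _⟩ <;>
  rcases abs_cases y with ⟨e2, _⟩ | ⟨e2, _⟩ <;>
  rcases abs_cases z with ⟨e3, _⟩ | ⟨e3, _⟩ <;> linarith

set_option maxHeartbeats 1000000 in
/-- Core real-variable estimate. -/
lemma core {a b c q σ₁ σ₂ τ₁ τ₂ τ₃ θ : ℝ}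
    (hσ₁ : σ₁ = 1 ∨ σ₁ = -1) (hσ₂ : σ₂ = 1 ∨ σ₂ = -1)
    (ha : 0 < a) (hb : 0 < b) (hc : 0 ≤ c)
    (hq : |q| ≤ a * b) (hc2 : c ^ 2 = a ^ 2 + b ^ 2 + 2 * q)
    (hτ : τ₁ + τ₂ + τ₃ = 0) (hθ0 : 0 ≤ θ) (hθπ : θ ≤ Real.pi)
    (hcos : Real.cos θ = σ₁ * σ₂ * q / (a * b)) :
    θ ≤ 8 * Real.sqrt ((jb (τ₁ + σ₁ * a) + jb (τ₂ + σ₂ * b) +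
      jb (|τ₃| - c)) / min (jb a) (jb b)) := by
  set r₁ := τ₁ + σ₁ * a with hr1'
  set r₂ := τ₂ + σ₂ * b with hr2'
  set r₃ := |τ₃| - c with hr3'
  set S := |r₁| + |r₂| + |r₃| with hS'
  have hS0 : 0 ≤ S := by positivity
  have habs3 : |τ₃| = c + r₃ := by rw [hr3']; ring
  have hτ3 : τ₃ = -r₁ - r₂ + σ₁ * a + σ₂ * b := by
    rw [hr1', hr2']; linarith
  have hab : 0 < a * b := mul_pos ha hb
  -- Key inequality: min a b * (a*b - σ₁σ₂ q) ≤ 2 a b S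
  have hkey : min a b * (a * b - σ₁ * σ₂ * q) ≤ 2 * (a * b) * S := by
    rcases hσ₁ with h1 | h1 <;> rcases hσ₂ with h2 | h2 <;> rw [h1, h2] at hτ3 ⊢
    · -- σ₁ = 1, σ₂ = 1
      have hS1 : a + b - c ≤ S := by
        have e1 : τ₃ + r₁ + r₂ = a + b := by rw [hτ3]; ring
        rw [hS']
        linarith [le_abs_self τ₃, le_abs_self r₁, le_abs_self r₂,
          le_abs_self r₃, (by linarith [le_abs_self τ₃, habs3] : τ₃ ≤ c + r₃)]
      have h := keyP ha hb hc hq hc2 hS1 hS0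
      linarith [h]
    · -- σ₁ = 1, σ₂ = -1
      have hS1 : c - |a - b| ≤ S := by
        have h3 : |τ₃| ≤ |r₁| + |r₂| + |a - b| :=
          abs3 r₁ r₂ (a - b) τ₃ (by rw [hτ3]; ring)
        rw [hS']; linarith [neg_abs_le r₃, habs3]
      have h := keyM ha hb hc hq hc2 hS1 hS0
      linarith [h]
    · -- σ₁ = -1, σ₂ = 1
      have hS1 : c - |a - b| ≤ S := by
        have h3 : |τ₃| ≤ |r₁| + |r₂| + |b - a| :=
          abs3 r₁ r₂ (b - a) τ₃ (by rw [hτ3]; ring)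
        rw [hS', abs_sub_comm a b]; linarith [neg_abs_le r₃, habs3]
      have h := keyM ha hb hc hq hc2 hS1 hS0
      linarith [h]
    · -- σ₁ = -1, σ₂ = -1
      have hS1 : a + b - c ≤ S := by
        have e1 : τ₃ + r₁ + r₂ = -(a + b) := by rw [hτ3]; ring
        rw [hS']
        linarith [neg_abs_le τ₃, neg_abs_le r₁, neg_abs_le r₂,
          le_abs_self r₃, (by linarith [neg_abs_le τ₃, habs3] : -τ₃ ≤ c + r₃)]
      have h := keyP ha hb hc hq hc2 hS1 hS0
      linarith [h]
  set m := min a b with hm'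
  have hm0 : 0 < m := lt_min ha hb
  -- m (1 - cos θ) ≤ 2 S
  have hmcos : m * (1 - Real.cos θ) ≤ 2 * S := by
    rw [hcos]
    have e : m * (1 - σ₁ * σ₂ * q / (a * b)) = m * (a * b - σ₁ * σ₂ * q) / (a * b) := by
      field_simp
    rw [e, div_le_iff₀ hab]
    nlinarith [hkey]
  -- θ² m ≤ 16 S
  have hθsq : θ ^ 2 * m ≤ 16 * S := by
    have hπ : 0 < Real.pi := Real.pi_pos
    have hπ4 : Real.pi ≤ 4 := by linarith [Real.pi_le_four]
    have hcos2 : Real.cos θ ≤ 1 - 2 / Real.pi ^ 2 * θ ^ 2 :=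
      Real.cos_le_one_sub_mul_cos_sq (by rw [abs_of_nonneg hθ0]; exact hθπ)
    have h5 : m * (2 / Real.pi ^ 2 * θ ^ 2) ≤ 2 * S :=
      le_trans (mul_le_mul_of_nonneg_left (by linarith) hm0.le) hmcos
    have e2 : θ ^ 2 * m = m * (2 / Real.pi ^ 2 * θ ^ 2) * (Real.pi ^ 2 / 2) := by
      field_simp
    rw [e2]
    calc m * (2 / Real.pi ^ 2 * θ ^ 2) * (Real.pi ^ 2 / 2)
        ≤ 2 * S * (Real.pi ^ 2 / 2) :=
          mul_le_mul_of_nonneg_right h5 (by positivity)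
      _ ≤ 16 * S := by
          have hπ216 : Real.pi ^ 2 ≤ 16 := by nlinarith
          nlinarith [mul_le_mul_of_nonneg_left hπ216 hS0]
  set N := jb r₁ + jb r₂ + jb r₃ with hN'
  set D := min (jb a) (jb b) with hD'
  have hSN : S ≤ N := by
    rw [hS', hN']
    gcongr <;> exact abs_le_jb _
  have hN3 : 3 ≤ N := by
    rw [hN']; linarith [one_le_jb r₁, one_le_jb r₂, one_le_jb r₃]
  have hD1 : 1 ≤ D := le_min (one_le_jb _) (one_le_jb _)
  have hD0 : 0 < D := by linarith
  have hDm : D = jb m := by rw [hD', hm', jb_min a b ha.le hb.le]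
  -- main quadratic bound
  have hmain2 : θ ^ 2 * D ≤ 64 * N := by
    rcases le_or_gt 1 m with hm1 | hm1
    · have hjm : jb m ≤ 3 / 2 * m := jb_le_of m _ (by linarith) (by nlinarith)
      rw [hDm]
      linarith [mul_le_mul_of_nonneg_left hjm (sq_nonneg θ), hθsq, hSN, hN3, hS0]
    · have hjm : jb m ≤ 3 / 2 := jb_le_of m _ (by norm_num) (by nlinarith)
      have hπ4 : Real.pi ≤ 4 := by linarith [Real.pi_le_four]
      have hθ16 : θ ^ 2 ≤ 16 := by nlinarith
      rw [hDm]
      have h7 : θ ^ 2 * jb m ≤ 16 * (3 / 2) :=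
        mul_le_mul hθ16 hjm (jb_nonneg m) (by norm_num)
      linarith [hN3]
  have hmain : θ ^ 2 ≤ 64 * (N / D) := by
    rw [← mul_div_assoc, le_div_iff₀ hD0]
    exact hmain2
  calc θ ≤ Real.sqrt (64 * (N / D)) := Real.le_sqrt_of_sq_le hmain
    _ = 8 * Real.sqrt (N / D) := by
        rw [Real.sqrt_mul (by norm_num) (N / D),
          show (64:ℝ) = 8 ^ 2 by norm_num, Real.sqrt_sq (by norm_num)]

/-- Selberg's angle estimate: for ξ₁+ξ₂+ξ₃ = 0, τ₁+τ₂+τ₃ = 0, ξ₁, ξ₂ ≠ 0 and any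
signs ±₁, ±₂ there is a universal constant C with
∠(±₁ξ₁, ±₂ξ₂) ≤ C ((⟨τ₁ ±₁ |ξ₁|⟩ + ⟨τ₂ ±₂ |ξ₂|⟩ + ⟨|τ₃| − |ξ₃|⟩)/min(⟨ξ₁⟩,⟨ξ₂⟩))^{1/2}. -/
theorem angle_estimate :
    ∃ C > 0, ∀ (ξ₁ ξ₂ ξ₃ : E2) (τ₁ τ₂ τ₃ σ₁ σ₂ : ℝ),
      (σ₁ = 1 ∨ σ₁ = -1) → (σ₂ = 1 ∨ σ₂ = -1) →
      ξ₁ + ξ₂ + ξ₃ = 0 → τ₁ + τ₂ + τ₃ = 0 → ξ₁ ≠ 0 → ξ₂ ≠ 0 →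
      InnerProductGeometry.angle (σ₁ • ξ₁) (σ₂ • ξ₂) ≤
        C * Real.sqrt ((jb (τ₁ + σ₁ * ‖ξ₁‖) + jb (τ₂ + σ₂ * ‖ξ₂‖) +
          jb (|τ₃| - ‖ξ₃‖)) / min (jb ‖ξ₁‖) (jb ‖ξ₂‖)) := by
  refine ⟨8, by norm_num, ?_⟩
  intro ξ₁ ξ₂ ξ₃ τ₁ τ₂ τ₃ σ₁ σ₂ hσ₁ hσ₂ hξ hτ h₁ h₂
  have ha : 0 < ‖ξ₁‖ := norm_pos_iff.mpr h₁
  have hb : 0 < ‖ξ₂‖ := norm_pos_iff.mpr h₂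
  have hc : 0 ≤ ‖ξ₃‖ := norm_nonneg _
  have hq : |(inner ℝ ξ₁ ξ₂ : ℝ)| ≤ ‖ξ₁‖ * ‖ξ₂‖ := abs_real_inner_le_norm ξ₁ ξ₂
  have hξ3 : ξ₃ = -(ξ₁ + ξ₂) := eq_neg_of_add_eq_zero_right hξ
  have hc2 : ‖ξ₃‖ ^ 2 = ‖ξ₁‖ ^ 2 + ‖ξ₂‖ ^ 2 + 2 * (inner ℝ ξ₁ ξ₂ : ℝ) := by
    rw [hξ3, norm_neg, norm_add_sq_real]; ring
  have hθ0 : 0 ≤ InnerProductGeometry.angle (σ₁ • ξ₁) (σ₂ • ξ₂) :=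
    InnerProductGeometry.angle_nonneg _ _
  have hθπ : InnerProductGeometry.angle (σ₁ • ξ₁) (σ₂ • ξ₂) ≤ Real.pi :=
    InnerProductGeometry.angle_le_pi _ _
  have hσ1a : |σ₁| = 1 := by rcases hσ₁ with h | h <;> rw [h] <;> norm_num
  have hσ2a : |σ₂| = 1 := by rcases hσ₂ with h | h <;> rw [h] <;> norm_num
  have hcos : Real.cos (InnerProductGeometry.angle (σ₁ • ξ₁) (σ₂ • ξ₂)) =
      σ₁ * σ₂ * (inner ℝ ξ₁ ξ₂ : ℝ) / (‖ξ₁‖ * ‖ξ₂‖) := by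
    rw [InnerProductGeometry.cos_angle, real_inner_smul_left,
      real_inner_smul_right, norm_smul, norm_smul, Real.norm_eq_abs,
      Real.norm_eq_abs, hσ1a, hσ2a, one_mul, one_mul]
    ring_nf
  exact core hσ₁ hσ₂ ha hb hc hq hc2 hτ hθ0 hθπ hcos
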